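/- Let τ ∈ ℂ ∖ {0}, λ ∈ ℂ, and let f = (f_1, …, f_p) ∈ (ℂ^m)^p satisfy K_p(τ) f = λ f. Set f_0 = τ^{-1} f_p. Then the vector (f_0, f_1) ∈ ℂ^{2m} satisfies M_p(λ) (f_0, f_1)ᵀ = τ (f_0, f_1)ᵀ. Moreover, the linear map sending f to (f_0, f_1) is injective on the λ-eigenspace of K_p(τ); in particular, if f ≠ 0 then (f_0, f_1) ≠ 0. -/
import Mathlib


open Matrix ComplexOrder

/-- The `pm × pm` block matrix `K_p(τ)` (blocks indexed by `Fin p`, entries inside a block by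
`Fin m`; block row/column `j : Fin p` corresponds to the `1`-based index `j+1`):
the `j`-th diagonal block is `b_j`, the `(j, j+1)` and `(j+1, j)` blocks are `a_j` for
`j = 1, …, p−1`, the `(1, p)` block is `τ⁻¹ a_p`, the `(p, 1)` block is `τ a_p`, and the
remaining blocks vanish (for `p = 2` the overlapping contributions add up). -/
noncomputable def Kmat (p m : ℕ) (a b : ℕ → Matrix (Fin m) (Fin m) ℂ) (τ : ℂ) :
    Matrix (Fin p × Fin m) (Fin p × Fin m) ℂ :=
  Matrix.of fun x y =>
    (if (x.1 : ℕ) = (y.1 : ℕ) then b ((x.1 : ℕ) + 1) x.2 y.2 else 0)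
    + (if (y.1 : ℕ) = (x.1 : ℕ) + 1 then a ((x.1 : ℕ) + 1) x.2 y.2 else 0)
    + (if (x.1 : ℕ) = (y.1 : ℕ) + 1 then a ((y.1 : ℕ) + 1) x.2 y.2 else 0)
    + (if (x.1 : ℕ) = 0 ∧ (y.1 : ℕ) = p - 1 then τ⁻¹ * a p x.2 y.2 else 0)
    + (if (x.1 : ℕ) = p - 1 ∧ (y.1 : ℕ) = 0 then τ * a p x.2 y.2 else 0)

/-- The matrix-valued solution `(y_n)_{n ∈ ℕ}` of the Jacobi recursion
`a_n y_{n+1} + b_n y_n + a_{n−1} y_{n−1} = z y_n` (for `n ≥ 1`) with initial data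
`y_0, y_1` (here `a, b : ℕ → _` are the `p`-periodic coefficient sequences, so that
`a 0 = a p`, etc.). -/
noncomputable def sol {m : ℕ} (a b : ℕ → Matrix (Fin m) (Fin m) ℂ) (z : ℂ)
    (y0 y1 : Matrix (Fin m) (Fin m) ℂ) : ℕ → Matrix (Fin m) (Fin m) ℂ
  | 0 => y0
  | 1 => y1
  | n + 2 =>
      (a (n + 1))⁻¹ *
        (z • sol a b z y0 y1 (n + 1) - b (n + 1) * sol a b z y0 y1 (n + 1)
          - a n * sol a b z y0 y1 n)

/-- The fundamental solution `φ_n(z)` with `φ_0 = 0`, `φ_1 = I_m`. -/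
noncomputable def phi {m : ℕ} (a b : ℕ → Matrix (Fin m) (Fin m) ℂ) (z : ℂ) :
    ℕ → Matrix (Fin m) (Fin m) ℂ :=
  sol a b z 0 1

/-- The fundamental solution `ϑ_n(z)` with `ϑ_0 = I_m`, `ϑ_1 = 0`. -/
noncomputable def theta {m : ℕ} (a b : ℕ → Matrix (Fin m) (Fin m) ℂ) (z : ℂ) :
    ℕ → Matrix (Fin m) (Fin m) ℂ :=
  sol a b z 1 0

/-- The `2m × 2m` monodromy matrix `M_p(z) = [[ϑ_p(z), φ_p(z)], [ϑ_{p+1}(z), φ_{p+1}(z)]]`. -/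
noncomputable def Mmat (p : ℕ) {m : ℕ} (a b : ℕ → Matrix (Fin m) (Fin m) ℂ) (z : ℂ) :
    Matrix (Fin m ⊕ Fin m) (Fin m ⊕ Fin m) ℂ :=
  Matrix.fromBlocks (theta a b z p) (phi a b z p) (theta a b z (p + 1)) (phi a b z (p + 1))

/-- The linear map sending `f = (f_1, …, f_p) ∈ (ℂ^m)^p` to `(f_0, f_1) ∈ ℂ^{2m}`, where
`f_0 = τ⁻¹ f_p` (the first summand is `f_0`, the second is `f_1`). -/
noncomputable def extract (p m : ℕ) (hp : 2 ≤ p) (τ : ℂ) (f : Fin p × Fin m → ℂ) :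
    Fin m ⊕ Fin m → ℂ :=
  Sum.elim (fun i => τ⁻¹ * f (⟨p - 1, by omega⟩, i)) (fun i => f (⟨0, by omega⟩, i))

lemma sum_fin_ite (p : ℕ) (c : ℕ) (F : Fin p → ℂ) :
    ∑ k : Fin p, (if (k : ℕ) = c then F k else 0) = if h : c < p then F ⟨c, h⟩ else 0 := by
  split_ifs with h
  · rw [Finset.sum_eq_single (⟨c, h⟩ : Fin p)]
    · simp
    · intro k _ hk
      rw [if_neg]
      simpa [Fin.ext_iff] using hk
    · simp
  · apply Finset.sum_eq_zero
    intro k _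
    rw [if_neg]
    have := k.isLt; omega

lemma key_sum (p m : ℕ) (f : Fin p × Fin m → ℂ) (c : ℕ) (E : Fin p → Fin m → ℂ)
    (P : Fin p → Prop) [DecidablePred P] (hP : ∀ k, P k ↔ (k : ℕ) = c) :
    ∑ k : Fin p, ∑ l : Fin m, (if P k then E k l else 0) * f (k, l)
      = if h : c < p then ∑ l : Fin m, E ⟨c, h⟩ l * f (⟨c, h⟩, l) else 0 := by
  have step : ∀ k : Fin p, (∑ l : Fin m, (if P k then E k l else 0) * f (k, l))
      = if (k : ℕ) = c then ∑ l : Fin m, E k l * f (k, l) else 0 := by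
    intro k
    by_cases hk : P k
    · rw [if_pos ((hP k).1 hk)]
      simp [hk]
    · rw [if_neg (fun h => hk ((hP k).2 h))]
      simp [hk]
  rw [Finset.sum_congr rfl (fun k _ => step k), sum_fin_ite]

lemma kmul (p m : ℕ) (hp : 0 < p) (a b : ℕ → Matrix (Fin m) (Fin m) ℂ) (τ : ℂ)
    (f : Fin p × Fin m → ℂ) (j : Fin p) (i : Fin m) :
    (Kmat p m a b τ).mulVec f (j, i) =
      (b ((j : ℕ) + 1)).mulVec (fun l => f (j, l)) i
      + (if h : (j : ℕ) + 1 < p then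
          (a ((j : ℕ) + 1)).mulVec (fun l => f (⟨(j : ℕ) + 1, h⟩, l)) i else 0)
      + (if h : 1 ≤ (j : ℕ) then
          (a (j : ℕ)).mulVec (fun l => f (⟨(j : ℕ) - 1, by omega⟩, l)) i else 0)
      + (if (j : ℕ) = 0 then τ⁻¹ * (a p).mulVec (fun l => f (⟨p - 1, by omega⟩, l)) i else 0)
      + (if (j : ℕ) = p - 1 then τ * (a p).mulVec (fun l => f (⟨0, hp⟩, l)) i else 0) := by
  simp only [Matrix.mulVec, dotProduct, Kmat, Matrix.of_apply]
  rw [Fintype.sum_prod_type]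
  simp only [add_mul, Finset.sum_add_distrib]
  congr 1
  congr 1
  congr 1
  congr 1
  · rw [key_sum p m f (↑j) (fun _ l => b (↑j + 1) i l) (fun k => (↑j : ℕ) = ↑k)
      (fun k => eq_comm), dif_pos j.isLt]
  · rw [key_sum p m f (↑j + 1) (fun _ l => a (↑j + 1) i l) (fun k => (↑k : ℕ) = ↑j + 1)
      (fun k => Iff.rfl)]
  · by_cases hj : 1 ≤ (j : ℕ)
    · rw [key_sum p m f (↑j - 1) (fun k l => a (↑k + 1) i l) (fun k => (↑j : ℕ) = ↑k + 1)
        (fun k => by omega), dif_pos (by have := j.isLt; omega : (↑j : ℕ) - 1 < p),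
        dif_pos hj]
      have : (↑j : ℕ) - 1 + 1 = ↑j := by omega
      rw [this]
    · rw [dif_neg hj]
      apply Finset.sum_eq_zero; intro k _
      apply Finset.sum_eq_zero; intro x _
      rw [if_neg (by omega), zero_mul]
  · by_cases hj : (j : ℕ) = 0
    · rw [key_sum p m f (p - 1) (fun _ l => τ⁻¹ * a p i l)
        (fun k => (↑j : ℕ) = 0 ∧ (↑k : ℕ) = p - 1) (fun k => by simp [hj]),
        dif_pos (by omega : p - 1 < p), if_pos hj, Finset.mul_sum]
      simp [mul_assoc]
    · rw [if_neg hj]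
      apply Finset.sum_eq_zero; intro k _
      apply Finset.sum_eq_zero; intro x _
      rw [if_neg (by omega), zero_mul]
  · by_cases hj : (j : ℕ) = p - 1
    · rw [key_sum p m f 0 (fun _ l => τ * a p i l)
        (fun k => (↑j : ℕ) = p - 1 ∧ (↑k : ℕ) = 0) (fun k => by simp [hj]),
        dif_pos hp, if_pos hj, Finset.mul_sum]
      simp [mul_assoc]
    · rw [if_neg hj]
      apply Finset.sum_eq_zero; intro k _
      apply Finset.sum_eq_zero; intro x _
      rw [if_neg (by omega), zero_mul]

lemma mulVec_scal {m : ℕ} (M : Matrix (Fin m) (Fin m) ℂ) (c : ℂ) (v : Fin m → ℂ) (i : Fin m) :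
    M.mulVec (fun l => c * v l) i = c * M.mulVec v i := by
  simp only [Matrix.mulVec, dotProduct, Finset.mul_sum]
  exact Finset.sum_congr rfl fun l _ => by ring

/-- The sequence `f_0, f_1, …, f_p, f_{p+1}` built from an eigenvector `f` of `K_p(τ)`. -/
noncomputable def gseq (p m : ℕ) (hp : 2 ≤ p) (τ : ℂ) (f : Fin p × Fin m → ℂ) :
    ℕ → Fin m → ℂ := fun n =>
  if n = 0 then fun i => τ⁻¹ * f (⟨p - 1, by omega⟩, i)
  else if h : n ≤ p then fun i => f (⟨n - 1, by omega⟩, i)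
  else fun i => τ * f (⟨0, by omega⟩, i)

lemma gseq_zero (p m : ℕ) (hp : 2 ≤ p) (τ : ℂ) (f : Fin p × Fin m → ℂ) :
    gseq p m hp τ f 0 = fun i => τ⁻¹ * f (⟨p - 1, by omega⟩, i) := by
  simp [gseq]

lemma gseq_of_le (p m : ℕ) (hp : 2 ≤ p) (τ : ℂ) (f : Fin p × Fin m → ℂ)
    (n : ℕ) (h1 : 1 ≤ n) (h2 : n ≤ p) :
    gseq p m hp τ f n = fun i => f (⟨n - 1, by omega⟩, i) := by
  rw [gseq, if_neg (by omega), dif_pos h2]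

lemma gseq_top (p m : ℕ) (hp : 2 ≤ p) (τ : ℂ) (f : Fin p × Fin m → ℂ) :
    gseq p m hp τ f (p + 1) = fun i => τ * f (⟨0, by omega⟩, i) := by
  rw [gseq, if_neg (by omega), dif_neg (by omega)]

lemma gseq_of_eq (p m : ℕ) (hp : 2 ≤ p) (τ : ℂ) (f : Fin p × Fin m → ℂ)
    (n : ℕ) (h1 : 1 ≤ n) (h2 : n ≤ p) (k : Fin p) (hk : (k : ℕ) = n - 1) :
    gseq p m hp τ f n = fun i => f (k, i) := by
  rw [gseq_of_le p m hp τ f n h1 h2]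
  have : (⟨n - 1, by omega⟩ : Fin p) = k := Fin.ext hk.symm
  rw [this]

lemma jacobi (p m : ℕ) (hp : 2 ≤ p) (a b : ℕ → Matrix (Fin m) (Fin m) ℂ)
    (hper : ∀ n, a (n + p) = a n ∧ b (n + p) = b n) (τ : ℂ) (lam : ℂ)
    (f : Fin p × Fin m → ℂ) (hf : (Kmat p m a b τ).mulVec f = lam • f)
    (n : ℕ) (h1 : 1 ≤ n) (h2 : n ≤ p) :
    (a n).mulVec (gseq p m hp τ f (n + 1)) =
      lam • gseq p m hp τ f n - (b n).mulVec (gseq p m hp τ f n)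
        - (a (n - 1)).mulVec (gseq p m hp τ f (n - 1)) := by
  have hap : a p = a 0 := by simpa using (hper 0).1
  funext i
  have hrow := congrFun hf (⟨n - 1, by omega⟩, i)
  rw [kmul p m (by omega) a b τ f ⟨n - 1, by omega⟩ i] at hrow
  simp only [Pi.smul_apply, smul_eq_mul] at hrow
  have hn1 : (n - 1 : ℕ) + 1 = n := by omega
  rw [hn1] at hrow
  rw [gseq_of_eq p m hp τ f n h1 h2 ⟨n - 1, by omega⟩ rfl]
  by_cases hcase : n = 1
  · subst hcase
    rw [dif_pos (by omega : 1 < p), dif_neg (by omega : ¬ (1:ℕ) ≤ 1 - 1),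
        if_pos (by omega : (1:ℕ) - 1 = 0), if_neg (by omega : ¬ (1:ℕ) - 1 = p - 1)] at hrow
    rw [gseq_of_eq p m hp τ f (1 + 1) (by omega) (by omega) ⟨1, by omega⟩ rfl, gseq_zero]
    simp only [Pi.sub_apply, Pi.smul_apply, smul_eq_mul, mulVec_scal]
    rw [show a (1 - 1) = a p from hap.symm]
    linear_combination hrow
  · by_cases hcase2 : n = p
    · rw [dif_neg (by omega : ¬ n < p), dif_pos (by omega : 1 ≤ n - 1),
          if_neg (by omega : ¬ n - 1 = 0), if_pos (by omega : n - 1 = p - 1)] at hrow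
      have hnp : n + 1 = p + 1 := by omega
      rw [hnp, gseq_top,
          gseq_of_eq p m hp τ f (n - 1) (by omega) (by omega) ⟨n - 1 - 1, by omega⟩ rfl]
      simp only [Pi.sub_apply, Pi.smul_apply, smul_eq_mul, mulVec_scal]
      rw [show a n = a p from by rw [hcase2]]
      have h0 : (⟨0, by omega⟩ : Fin p) = ⟨0, by omega⟩ := rfl
      linear_combination hrow
    · rw [dif_pos (by omega : n < p), dif_pos (by omega : 1 ≤ n - 1),
          if_neg (by omega : ¬ n - 1 = 0), if_neg (by omega : ¬ n - 1 = p - 1)] at hrow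
      rw [gseq_of_eq p m hp τ f (n + 1) (by omega) (by omega) ⟨n, by omega⟩ (by simp),
          gseq_of_eq p m hp τ f (n - 1) (by omega) (by omega) ⟨n - 1 - 1, by omega⟩ rfl]
      simp only [Pi.sub_apply, Pi.smul_apply, smul_eq_mul]
      linear_combination hrow

lemma theta_rec {m : ℕ} (a b : ℕ → Matrix (Fin m) (Fin m) ℂ) (z : ℂ) (n : ℕ) :
    theta a b z (n + 2) = (a (n + 1))⁻¹ *
      (z • theta a b z (n + 1) - b (n + 1) * theta a b z (n + 1) - a n * theta a b z n) := rfl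

lemma phi_rec {m : ℕ} (a b : ℕ → Matrix (Fin m) (Fin m) ℂ) (z : ℂ) (n : ℕ) :
    phi a b z (n + 2) = (a (n + 1))⁻¹ *
      (z • phi a b z (n + 1) - b (n + 1) * phi a b z (n + 1) - a n * phi a b z n) := rfl

lemma gseq_eq (p m : ℕ) (hp : 2 ≤ p) (a b : ℕ → Matrix (Fin m) (Fin m) ℂ)
    (hper : ∀ n, a (n + p) = a n ∧ b (n + p) = b n) (ha : ∀ n, (a n).PosDef)
    (τ lam : ℂ) (f : Fin p × Fin m → ℂ) (hf : (Kmat p m a b τ).mulVec f = lam • f) :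
    ∀ n, n ≤ p + 1 → gseq p m hp τ f n =
      (theta a b lam n).mulVec (gseq p m hp τ f 0)
        + (phi a b lam n).mulVec (gseq p m hp τ f 1) := by
  intro n
  induction n using Nat.strong_induction_on with
  | _ n ih =>
    match n with
    | 0 => intro _; simp [theta, phi, sol]
    | 1 => intro _; simp [theta, phi, sol]
    | (k+2) =>
      intro hk
      have e0 := ih k (by omega) (by omega)
      have e1 := ih (k+1) (by omega) (by omega)
      have hj := jacobi p m hp a b hper τ lam f hf (k+1) (by omega) (by omega)
      rw [show k+1+1 = k+2 from rfl] at hj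
      simp only [Nat.add_sub_cancel] at hj
      rw [theta_rec, phi_rec, ← Matrix.mulVec_mulVec, ← Matrix.mulVec_mulVec,
        ← Matrix.mulVec_add]
      have inner : (lam • theta a b lam (k+1) - b (k+1) * theta a b lam (k+1)
            - a k * theta a b lam k).mulVec (gseq p m hp τ f 0)
          + (lam • phi a b lam (k+1) - b (k+1) * phi a b lam (k+1)
            - a k * phi a b lam k).mulVec (gseq p m hp τ f 1)
          = (a (k+1)).mulVec (gseq p m hp τ f (k+2)) := by
        rw [hj, e1, e0]
        simp only [Matrix.sub_mulVec, Matrix.smul_mulVec, ← Matrix.mulVec_mulVec,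
          Matrix.mulVec_add, smul_add, smul_sub]
        abel
      rw [inner, Matrix.mulVec_mulVec,
        Matrix.nonsing_inv_mul _ ((Matrix.isUnit_iff_isUnit_det _).mp (ha (k+1)).isUnit),
        Matrix.one_mulVec]

/-- Let `τ ∈ ℂ ∖ {0}`, `lam ∈ ℂ`, and let `f = (f_1, …, f_p) ∈ (ℂ^m)^p`
satisfy `K_p(τ) f = lam f`.  Set `f_0 = τ⁻¹ f_p`.  Then the vector `(f_0, f_1) ∈ ℂ^{2m}`
satisfies `M_p(lam) (f_0, f_1)ᵀ = τ (f_0, f_1)ᵀ`.  Moreover, the linear map sending `f` to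
`(f_0, f_1)` is injective on the `lam`-eigenspace of `K_p(τ)`; in particular, if `f ≠ 0`
then `(f_0, f_1) ≠ 0`. -/
theorem stmt10 (m p : ℕ) (hm : 1 ≤ m) (hp : 2 ≤ p)
    (a b : ℕ → Matrix (Fin m) (Fin m) ℂ)
    (hper : ∀ n, a (n + p) = a n ∧ b (n + p) = b n)
    (ha : ∀ n, (a n).PosDef) (hb : ∀ n, (b n).IsHermitian)
    (τ : ℂ) (hτ : τ ≠ 0) (lam : ℂ)
    (f : Fin p × Fin m → ℂ)
    (hf : (Kmat p m a b τ).mulVec f = lam • f) :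
    (Mmat p a b lam).mulVec (extract p m hp τ f) = τ • extract p m hp τ f ∧
    (∀ f' : Fin p × Fin m → ℂ, (Kmat p m a b τ).mulVec f' = lam • f' →
      extract p m hp τ f' = extract p m hp τ f → f' = f) ∧
    (f ≠ 0 → extract p m hp τ f ≠ 0) := by

  have hjlt : ∀ j : Fin p, (j : ℕ) < p := fun j => j.isLt
  -- identification of `extract` with the pair `(gseq 0, gseq 1)`
  have h0 : ∀ g : Fin p × Fin m → ℂ,
      gseq p m hp τ g 0 = fun i => τ⁻¹ * g (⟨p - 1, by omega⟩, i) := fun g => gseq_zero ..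
  have h1 : ∀ g : Fin p × Fin m → ℂ,
      gseq p m hp τ g 1 = fun i => g (⟨0, by omega⟩, i) := fun g =>
    gseq_of_eq p m hp τ g 1 le_rfl (by omega) ⟨0, by omega⟩ (by simp)
  have hext : ∀ g : Fin p × Fin m → ℂ,
      extract p m hp τ g = Sum.elim (gseq p m hp τ g 0) (gseq p m hp τ g 1) := by
    intro g
    funext x
    cases x with
    | inl i => rw [h0]; rfl
    | inr i => rw [h1]; rfl
  have hgp : gseq p m hp τ f p = fun i => f (⟨p - 1, by omega⟩, i) :=
    gseq_of_eq p m hp τ f p (by omega) le_rfl ⟨p - 1, by omega⟩ (by simp)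
  have hgp1 : gseq p m hp τ f (p + 1) = fun i => τ * f (⟨0, by omega⟩, i) :=
    gseq_top p m hp τ f
  have key1 := gseq_eq p m hp a b hper ha τ lam f hf p (by omega)
  have key2 := gseq_eq p m hp a b hper ha τ lam f hf (p + 1) le_rfl
  refine ⟨?_, ?_, ?_⟩
  · rw [hext, Mmat, Matrix.fromBlocks_mulVec, Sum.elim_comp_inl, Sum.elim_comp_inr,
      ← key1, ← key2, hgp, hgp1]
    funext x
    cases x with
    | inl i =>
      simp only [Sum.elim_inl, Pi.smul_apply, smul_eq_mul, h0]
      rw [← mul_assoc, mul_inv_cancel₀ hτ, one_mul]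
    | inr i => simp only [Sum.elim_inr, Pi.smul_apply, smul_eq_mul, h1]
  · intro f' hf' hx
    have g0eq : gseq p m hp τ f' 0 = gseq p m hp τ f 0 := by
      rw [hext f', hext f] at hx
      funext i
      exact congrFun hx (Sum.inl i)
    have g1eq : gseq p m hp τ f' 1 = gseq p m hp τ f 1 := by
      rw [hext f', hext f] at hx
      funext i
      exact congrFun hx (Sum.inr i)
    funext x
    obtain ⟨j, i⟩ := x
    have hv : ∀ g : Fin p × Fin m → ℂ,
        gseq p m hp τ g ((j : ℕ) + 1) = fun i => g (j, i) := fun g =>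
      gseq_of_eq p m hp τ g ((j : ℕ) + 1) (by omega) (by have := hjlt j; omega) j (by simp)
    have e' := gseq_eq p m hp a b hper ha τ lam f' hf' ((j : ℕ) + 1)
      (by have := hjlt j; omega)
    have e := gseq_eq p m hp a b hper ha τ lam f hf ((j : ℕ) + 1)
      (by have := hjlt j; omega)
    have : gseq p m hp τ f' ((j : ℕ) + 1) = gseq p m hp τ f ((j : ℕ) + 1) := by
      rw [e', e, g0eq, g1eq]
    calc f' (j, i) = gseq p m hp τ f' ((j : ℕ) + 1) i := (congrFun (hv f') i).symm
      _ = gseq p m hp τ f ((j : ℕ) + 1) i := by rw [this]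
      _ = f (j, i) := congrFun (hv f) i
  · intro hfne hc
    apply hfne
    have g0eq : gseq p m hp τ f 0 = 0 := by
      funext i
      have := congrFun hc (Sum.inl i)
      rw [hext f] at this
      simpa using this
    have g1eq : gseq p m hp τ f 1 = 0 := by
      funext i
      have := congrFun hc (Sum.inr i)
      rw [hext f] at this
      simpa using this
    funext x
    obtain ⟨j, i⟩ := x
    have hv : gseq p m hp τ f ((j : ℕ) + 1) = fun i => f (j, i) :=
      gseq_of_eq p m hp τ f ((j : ℕ) + 1) (by omega) (by have := hjlt j; omega) j (by simp)
    have e := gseq_eq p m hp a b hper ha τ lam f hf ((j : ℕ) + 1)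
      (by have := hjlt j; omega)
    have : gseq p m hp τ f ((j : ℕ) + 1) = 0 := by
      rw [e, g0eq, g1eq]
      simp
    rw [← congrFun (hv) i, this]
    rfl
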